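/- If F = (X; f₁,…,f_N) is a point-fibred IFS on a compact Hausdorff space X with attractor A, then the basin of A is all of X; that is, for every nonempty compact subset B of X, lim_{k→∞} F^k(B) = A in the Vietoris topology on K(X), where F(B) = ⋃_{i=1}^N f_i(B). -/

import Mathlib

open Set Topology Filter

/-- `seqComp f σ k` is the composition `f_{σ|k} = f_{σ₁} ∘ f_{σ₂} ∘ ⋯ ∘ f_{σ_k}`
(with the sequence `σ` indexed from `0`). -/
def seqComp {X : Type*} {N : ℕ} (f : Fin N → X → X) (σ : ℕ → Fin N) : ℕ → X → X
  | 0 => id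
  | k + 1 => seqComp f σ k ∘ f (σ k)

/-- `PiMap f σ = ⋂_{k ≥ 1} f_{σ₁} ∘ ⋯ ∘ f_{σ_k}(X)`. -/
def PiMap {X : Type*} {N : ℕ} (f : Fin N → X → X) (σ : ℕ → Fin N) : Set X :=
  ⋂ k : ℕ, seqComp f σ (k + 1) '' Set.univ

/-- The Vietoris topology (on all subsets of `X`; the Vietoris topology on the
nonempty compact subsets `K(X)` is the subspace topology it induces): it is generated
by the sets `{B | B ⊆ U}` and `{B | B ∩ U ≠ ∅}` for `U ⊆ X` open. -/
def vietoris (X : Type*) [TopologicalSpace X] : TopologicalSpace (Set X) :=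
  TopologicalSpace.generateFrom
    ({S | ∃ U : Set X, IsOpen U ∧ S = {B : Set X | B ⊆ U}} ∪
     {S | ∃ U : Set X, IsOpen U ∧ S = {B : Set X | (B ∩ U).Nonempty}})

namespace BasinAux

variable {X : Type*} {N : ℕ}

lemma seqComp_succ (f : Fin N → X → X) (σ : ℕ → Fin N) (k : ℕ) :
    seqComp f σ (k+1) = seqComp f σ k ∘ f (σ k) := rfl

lemma seqComp_congr (f : Fin N → X → X) {σ τ : ℕ → Fin N} :
    ∀ k, (∀ j, j < k → σ j = τ j) → seqComp f σ k = seqComp f τ k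
  | 0, _ => rfl
  | k+1, h => by
    rw [seqComp_succ, seqComp_succ, seqComp_congr f k (fun j hj => h j (Nat.lt_succ_of_lt hj)),
      h k (Nat.lt_succ_self k)]

/-- antitone images -/
lemma seqComp_image_anti (f : Fin N → X → X) (σ : ℕ → Fin N) (k : ℕ) :
    seqComp f σ (k+1) '' univ ⊆ seqComp f σ k '' univ := by
  rw [seqComp_succ, image_comp]
  exact image_mono (subset_univ _)

lemma iterate_eq_iUnion [Nonempty (Fin N)] (f : Fin N → X → X) (B : Set X) :
    ∀ k, (fun C : Set X => ⋃ i, f i '' C)^[k] B = ⋃ σ : ℕ → Fin N, seqComp f σ k '' B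
  | 0 => by simpa [seqComp] using (iUnion_const (ι := ℕ → Fin N) B).symm
  | k+1 => by
    rw [Function.iterate_succ_apply, iterate_eq_iUnion f _ k]
    ext x
    simp only [mem_iUnion, seqComp_succ]
    constructor
    · rintro ⟨σ, hx⟩
      rw [image_iUnion] at hx
      obtain ⟨i, hi⟩ := mem_iUnion.mp hx
      rw [← image_comp] at hi
      refine ⟨Function.update σ k i, ?_⟩
      rw [seqComp_congr f k (σ := Function.update σ k i) (τ := σ)
        (fun j hj => Function.update_of_ne (Nat.ne_of_lt hj) _ _),
        Function.update_self]
      exact hi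
    · rintro ⟨σ, hx⟩
      refine ⟨σ, ?_⟩
      rw [image_iUnion]
      exact mem_iUnion.mpr ⟨σ k, by rwa [← image_comp]⟩

lemma exists_branch [Nonempty (Fin N)] (f : Fin N → X → X) {x : X}
    (hx : ∀ k, ∃ σ : ℕ → Fin N, x ∈ seqComp f σ k '' univ) :
    ∃ σ : ℕ → Fin N, ∀ k, x ∈ seqComp f σ k '' univ := by
  set S : ℕ → Set (ℕ → Fin N) := fun k => {σ | x ∈ seqComp f σ k '' univ} with hS
  have hanti : Antitone S := antitone_nat_of_succ_le (fun k σ hσ =>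
    seqComp_image_anti f σ k hσ)
  have hclosed : ∀ k, IsClosed (S k) := by
    intro k
    have : S k = (fun σ : ℕ → Fin N => fun j : Fin k => σ j) ⁻¹'
        {w : Fin k → Fin N |
          x ∈ seqComp f (fun n => if h : n < k then w ⟨n, h⟩ else Classical.arbitrary _) k '' univ} := by
      ext σ
      simp only [mem_preimage, mem_setOf_eq, hS]
      rw [seqComp_congr f k (σ := σ)
        (τ := fun n => if h : n < k then σ n else Classical.arbitrary _)
        (fun j hj => by simp [hj])]
    rw [this]
    exact (isClosed_discrete _).preimage (continuous_pi fun j => continuous_apply _)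
  obtain ⟨σ, hσ⟩ := IsCompact.nonempty_iInter_of_directed_nonempty_isCompact_isClosed S
    hanti.directed_ge hx (fun k => (hclosed k).isCompact) hclosed
  exact ⟨σ, fun k => mem_iInter.mp hσ k⟩

end BasinAux

theorem basin_eq_univ
    {X : Type*} [TopologicalSpace X] [CompactSpace X] [T2Space X] [Nonempty X]
    {N : ℕ} (hN : 0 < N) (f : Fin N → X → X) (hf : ∀ i, Continuous (f i))
    (hpf : ∀ σ : ℕ → Fin N, ∃ x : X, PiMap f σ = {x})
    -- `A` is an attractor of `F`:
    (A : Set X) (hA₁ : A.Nonempty) (hA₂ : IsCompact A) (hA₃ : (⋃ i, f i '' A) = A)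
    (hA₄ : ∃ U : Set X, IsOpen U ∧ A ⊆ U ∧
      ∀ B : Set X, B.Nonempty → IsCompact B → B ⊆ U →
        Filter.Tendsto (fun k => (fun C : Set X => ⋃ i, f i '' C)^[k] B)
          Filter.atTop (@nhds (Set X) (vietoris X) A)) :
    ∀ B : Set X, B.Nonempty → IsCompact B →
      Filter.Tendsto (fun k => (fun C : Set X => ⋃ i, f i '' C)^[k] B)
        Filter.atTop (@nhds (Set X) (vietoris X) A) := by
  haveI : Nonempty (Fin N) := Fin.pos_iff_nonempty.mp hN
  set F : Set X → Set X := fun C : Set X => ⋃ i, f i '' C with hF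
  have hfA : ∀ i, f i '' A ⊆ A := fun i =>
    (subset_iUnion (fun i => f i '' A) i).trans hA₃.subset
  have hseqA : ∀ (σ : ℕ → Fin N) (k), seqComp f σ k '' A ⊆ A := by
    intro σ k
    induction k with
    | zero => simp [seqComp]
    | succ k ih =>
      rw [BasinAux.seqComp_succ, image_comp]
      exact (image_mono (hfA _)).trans ih
  have hseqc : ∀ (σ : ℕ → Fin N) (k), Continuous (seqComp f σ k) := by
    intro σ k
    induction k with
    | zero => exact continuous_id
    | succ k ih => exact ih.comp (hf _)
  -- each point of `PiMap f σ` is in `A`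
  have hPiA : ∀ σ : ℕ → Fin N, PiMap f σ ⊆ A := by
    intro σ
    obtain ⟨x, hx⟩ := hpf σ
    obtain ⟨a, ha⟩ := hA₁
    have hne : (⋂ k, A ∩ seqComp f σ (k + 1) '' univ).Nonempty := by
      apply IsCompact.nonempty_iInter_of_directed_nonempty_isCompact_isClosed
      · exact (antitone_nat_of_succ_le fun k =>
          inter_subset_inter_right _ (BasinAux.seqComp_image_anti f σ (k + 1))).directed_ge
      · exact fun k => ⟨seqComp f σ (k + 1) a, hseqA σ (k + 1) ⟨a, ha, rfl⟩, ⟨a, trivial, rfl⟩⟩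
      · exact fun k => hA₂.inter_right ((isCompact_univ.image (hseqc σ (k + 1))).isClosed)
      · exact fun k => hA₂.isClosed.inter ((isCompact_univ.image (hseqc σ (k + 1))).isClosed)
    obtain ⟨y, hy⟩ := hne
    have hyA : y ∈ A := (mem_iInter.mp hy 0).1
    have hyP : y ∈ PiMap f σ := mem_iInter.mpr fun k => (mem_iInter.mp hy k).2
    rw [hx] at hyP ⊢
    exact singleton_subset_iff.mpr (mem_singleton_iff.mp hyP ▸ hyA)
  -- the intersection of the iterates of `univ` is contained in `A`
  have hIA : (⋂ k, F^[k] univ) ⊆ A := by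
    intro x hxm
    have hx : ∀ k, ∃ σ : ℕ → Fin N, x ∈ seqComp f σ k '' univ := by
      intro k
      have h := mem_iInter.mp hxm k
      rw [hF, BasinAux.iterate_eq_iUnion f univ k] at h
      exact mem_iUnion.mp h
    obtain ⟨σ, hσ⟩ := BasinAux.exists_branch f hx
    exact hPiA σ (mem_iInter.mpr fun k => hσ (k + 1))
  have hcomp : ∀ (B : Set X), IsCompact B → ∀ k, IsCompact (F^[k] B) := by
    intro B hB k
    induction k with
    | zero => simpa
    | succ k ih =>
      rw [Function.iterate_succ_apply']
      exact isCompact_iUnion fun i => ih.image (hf i)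
  have hnemp : ∀ (B : Set X), B.Nonempty → ∀ k, (F^[k] B).Nonempty := by
    intro B hB k
    induction k with
    | zero => simpa
    | succ k ih =>
      rw [Function.iterate_succ_apply']
      obtain ⟨x, hx⟩ := ih
      exact ⟨f (Classical.arbitrary _) x, mem_iUnion.mpr ⟨_, ⟨x, hx, rfl⟩⟩⟩
  have hmono : Monotone F := fun s t hst => iUnion_mono fun i => image_mono hst
  have hanti : Antitone (fun k => F^[k] univ) := antitone_nat_of_succ_le fun k => by
    rw [Function.iterate_succ_apply]
    exact (hmono.iterate k) (subset_univ _)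
  obtain ⟨U, hU, hAU, hbasin⟩ := hA₄
  -- some iterate of `univ` is inside `U`
  have hm : ∃ m, F^[m] univ ⊆ U := by
    by_contra h
    push_neg at h
    have hne2 : ∀ k, ((F^[k] univ) ∩ Uᶜ).Nonempty := fun k =>
      inter_compl_nonempty_iff.mpr (h k)
    obtain ⟨x, hxm⟩ :=
      IsCompact.nonempty_iInter_of_directed_nonempty_isCompact_isClosed
        (fun k => F^[k] univ ∩ Uᶜ)
        ((antitone_nat_of_succ_le fun k =>
          inter_subset_inter_left _ (hanti (Nat.le_succ k))).directed_ge)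
        hne2
        (fun k => (hcomp univ isCompact_univ k).inter_right hU.isClosed_compl)
        (fun k => ((hcomp univ isCompact_univ k).isClosed).inter hU.isClosed_compl)
    have hxA : x ∈ A := hIA (mem_iInter.mpr fun k => (mem_iInter.mp hxm k).1)
    exact (mem_iInter.mp hxm 0).2 (hAU hxA)
  intro B hB hBc
  obtain ⟨m, hmU⟩ := hm
  have hsub : F^[m] B ⊆ U := ((hmono.iterate m) (subset_univ B)).trans hmU
  have h1 : Tendsto (fun k => F^[k] (F^[m] B)) atTop (@nhds (Set X) (vietoris X) A) :=
    hbasin _ (hnemp B hB m) (hcomp B hBc m) hsub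
  have h2 : (fun k => F^[k] (F^[m] B)) = fun k => F^[k + m] B := by
    funext k
    exact (Function.iterate_add_apply _ k m B).symm
  rw [h2] at h1
  exact (tendsto_add_atTop_iff_nat m).mp h1
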